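/- arXiv:2107.08557 — 7 statements merged into one kernel-verified Lean document; each statement's English description precedes it below -/
import Mathlib

section
/- Let L be a Banach space, ω ∈ L, and for each i = 1,…,n let τ ↦ L_i(τ) be a continuously differentiable map from ℝ to the bounded operators on L such that L_i(τ)ω is constant in τ (i.e. (d/dτ)(L_i(τ)ω) = 0) and sup_τ ‖L_i(τ)‖ < ∞. Assume there is an integrable function c : ℝ → [0,∞) with ‖[L_i'(τ), L_j(τ)]‖ ≤ c(τ) for all i, j and all τ ≤ 0. Then the vector Λ(τ) = L_1(τ) L_2(τ) ⋯ L_n(τ) ω converges in L as τ → −∞. -/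
open Filter MeasureTheory

/-- Convergence of Λ(τ) = L_1(τ)⋯L_n(τ)ω as τ → −∞ under a summable
commutator bound `‖[L_i'(τ), L_j(τ)]‖ ≤ c(τ)`. -/
theorem stmt0
    {L : Type*} [NormedAddCommGroup L] [NormedSpace ℝ L] [CompleteSpace L]
    (ω : L) (n : ℕ) (Ls Ls' : Fin n → ℝ → (L →L[ℝ] L))
    (hderiv : ∀ i τ, HasDerivAt (Ls i) (Ls' i τ) τ)
    (hcont : ∀ i, Continuous (Ls' i))
    (hconst : ∀ i τ τ', (Ls i τ) ω = (Ls i τ') ω)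
    (M : ℝ) (hbound : ∀ i τ, ‖Ls i τ‖ ≤ M)
    (c : ℝ → ℝ) (hc_nonneg : ∀ τ, 0 ≤ c τ)
    (hc_int : IntegrableOn c (Set.Iic (0 : ℝ)))
    (hcomm : ∀ i j τ, τ ≤ 0 →
      ‖Ls' i τ * Ls j τ - Ls j τ * Ls' i τ‖ ≤ c τ) :
    ∃ Λ : L, Tendsto (fun τ : ℝ => ((List.ofFn fun i => Ls i τ).prod) ω) atBot (nhds Λ) := by
  set M' : ℝ := max M 1 with hM'def
  have hM'1 : (1 : ℝ) ≤ M' := le_max_right _ _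
  have hM'0 : (0 : ℝ) ≤ M' := by linarith
  have hLM' : ∀ (i : Fin n) (τ : ℝ), ‖Ls i τ‖ ≤ M' :=
    fun i τ => (hbound i τ).trans (le_max_left _ _)
  have hLscont : ∀ i : Fin n, Continuous (Ls i) :=
    fun i => continuous_iff_continuousAt.2 fun τ => (hderiv i τ).continuousAt
  -- the derivative kills ω
  have hzero : ∀ (i : Fin n) (τ : ℝ), Ls' i τ ω = 0 := by
    intro i τ
    have h1 : HasDerivAt (fun s => Ls i s ω) (Ls' i τ ω + Ls i τ 0) τ :=
      (hderiv i τ).clm_apply (hasDerivAt_const τ ω)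
    have h2 : HasDerivAt (fun s => Ls i s ω) 0 τ := by
      have : (fun s : ℝ => Ls i s ω) = fun _ => Ls i 0 ω := by
        funext s; exact hconst i s 0
      rw [this]; exact hasDerivAt_const τ _
    have := h1.unique h2
    simpa using this
  -- bound on products applied to a vector
  have prodbound : ∀ (l : List (Fin n)) (τ : ℝ) (v : L),
      ‖((l.map fun j => Ls j τ).prod) v‖ ≤ M' ^ l.length * ‖v‖ := by
    intro l
    induction l with
    | nil => intro τ v; simp
    | cons j t ih =>
      intro τ v
      simp only [List.map_cons, List.prod_cons, ContinuousLinearMap.mul_apply,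
        List.length_cons, pow_succ]
      calc ‖Ls j τ (((t.map fun j => Ls j τ).prod) v)‖
          ≤ ‖Ls j τ‖ * ‖((t.map fun j => Ls j τ).prod) v‖ :=
            (Ls j τ).le_opNorm _
        _ ≤ M' * (M' ^ t.length * ‖v‖) :=
            mul_le_mul (hLM' j τ) (ih τ v) (norm_nonneg _) hM'0
        _ = M' ^ t.length * M' * ‖v‖ := by ring
  -- key commutator estimate
  have keyA : ∀ (i : Fin n) (l : List (Fin n)), ∃ K : ℝ, 0 ≤ K ∧ ∀ τ ≤ (0 : ℝ),
      ‖Ls' i τ (((l.map fun j => Ls j τ).prod) ω)‖ ≤ K * c τ := by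
    intro i l
    induction l with
    | nil =>
      exact ⟨0, le_refl _, fun τ _ => by simp [hzero i τ]⟩
    | cons j t ih =>
      obtain ⟨K, hK0, hK⟩ := ih
      refine ⟨M' ^ t.length * ‖ω‖ + M' * K,
        add_nonneg (by positivity) (mul_nonneg hM'0 hK0), fun τ hτ => ?_⟩
      simp only [List.map_cons, List.prod_cons, ContinuousLinearMap.mul_apply]
      set v := ((t.map fun j => Ls j τ).prod) ω with hv
      have hsplit : Ls' i τ (Ls j τ v) =
          (Ls' i τ * Ls j τ - Ls j τ * Ls' i τ) v + Ls j τ (Ls' i τ v) := by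
        simp [ContinuousLinearMap.sub_apply, ContinuousLinearMap.mul_apply]
      calc ‖Ls' i τ (Ls j τ v)‖
          ≤ ‖(Ls' i τ * Ls j τ - Ls j τ * Ls' i τ) v‖ + ‖Ls j τ (Ls' i τ v)‖ := by
            rw [hsplit]; exact norm_add_le _ _
        _ ≤ c τ * (M' ^ t.length * ‖ω‖) + M' * (K * c τ) := by
            refine add_le_add ?_ ?_
            · exact le_trans ((Ls' i τ * Ls j τ - Ls j τ * Ls' i τ).le_opNorm v)
                (mul_le_mul (hcomm i j τ hτ) (prodbound t τ ω) (norm_nonneg _)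
                  (hc_nonneg τ))
            · exact le_trans ((Ls j τ).le_opNorm _)
                (mul_le_mul (hLM' j τ) (hK τ hτ) (norm_nonneg _) hM'0)
        _ = (M' ^ t.length * ‖ω‖ + M' * K) * c τ := by ring
  -- derivative of the product applied to ω, with a bound
  have keyB : ∀ l : List (Fin n), ∃ g : ℝ → L, ∃ K : ℝ, 0 ≤ K ∧ Continuous g ∧
      (∀ τ : ℝ, HasDerivAt (fun s => ((l.map fun j => Ls j s).prod) ω) (g τ) τ) ∧
      ∀ τ ≤ (0 : ℝ), ‖g τ‖ ≤ K * c τ := by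
    intro l
    induction l with
    | nil =>
      refine ⟨fun _ => 0, 0, le_refl _, continuous_const, fun τ => ?_, fun τ _ => by simp⟩
      simpa using hasDerivAt_const τ ω
    | cons i t ih =>
      obtain ⟨g, K, hK0, hgc, hgd, hgb⟩ := ih
      obtain ⟨KA, hKA0, hA⟩ := keyA i t
      have hftcont : Continuous (fun s => ((t.map fun j => Ls j s).prod) ω) :=
        continuous_iff_continuousAt.2 fun τ => (hgd τ).continuousAt
      refine ⟨fun τ => Ls' i τ (((t.map fun j => Ls j τ).prod) ω) + Ls i τ (g τ),
        KA + M' * K, add_nonneg hKA0 (mul_nonneg hM'0 hK0),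
        ((hcont i).clm_apply hftcont).add ((hLscont i).clm_apply hgc),
        fun τ => ?_, fun τ hτ => ?_⟩
      · have := (hderiv i τ).clm_apply (hgd τ)
        simpa [ContinuousLinearMap.mul_apply] using this
      · calc ‖Ls' i τ (((t.map fun j => Ls j τ).prod) ω) + Ls i τ (g τ)‖
            ≤ ‖Ls' i τ (((t.map fun j => Ls j τ).prod) ω)‖ + ‖Ls i τ (g τ)‖ :=
              norm_add_le _ _
          _ ≤ KA * c τ + M' * (K * c τ) := by
              refine add_le_add (hA τ hτ) ?_
              exact le_trans ((Ls i τ).le_opNorm _)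
                (mul_le_mul (hLM' i τ) (hgb τ hτ) (norm_nonneg _) hM'0)
          _ = (KA + M' * K) * c τ := by ring
  obtain ⟨g, K, hK0, hgc, hgd, hgb⟩ := keyB (List.finRange n)
  set f : ℝ → L := fun s => (((List.finRange n).map fun j => Ls j s).prod) ω with hfdef
  -- fundamental theorem of calculus estimate
  have hftc : ∀ a b : ℝ, a ≤ b → b ≤ 0 → ‖f b - f a‖ ≤ K * ∫ t in Set.Iic b, c t := by
    intro a b hab hb0
    have hci : IntervalIntegrable c volume a b := by
      apply IntegrableOn.intervalIntegrable
      apply hc_int.mono_set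
      rw [Set.uIcc_of_le hab]
      exact fun x hx => le_trans hx.2 hb0
    have heq : (∫ t in a..b, g t) = f b - f a :=
      intervalIntegral.integral_eq_sub_of_hasDerivAt (fun x _ => hgd x)
        (hgc.intervalIntegrable a b)
    have h1 : ‖f b - f a‖ ≤ ∫ t in a..b, ‖g t‖ := by
      rw [← heq]
      exact intervalIntegral.norm_integral_le_integral_norm hab
    have h2 : (∫ t in a..b, ‖g t‖) ≤ ∫ t in a..b, K * c t := by
      apply intervalIntegral.integral_mono_on hab (hgc.norm.intervalIntegrable a b)
        (hci.const_mul K)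
      intro x hx
      exact hgb x (le_trans hx.2 hb0)
    have h3 : (∫ t in a..b, K * c t) = K * ∫ t in Set.Ioc a b, c t := by
      rw [intervalIntegral.integral_const_mul, intervalIntegral.integral_of_le hab]
    have h4 : (∫ t in Set.Ioc a b, c t) ≤ ∫ t in Set.Iic b, c t := by
      apply setIntegral_mono_set (hc_int.mono_set (Set.Iic_subset_Iic.2 hb0))
      · exact Eventually.of_forall fun x => hc_nonneg x
      · exact Eventually.of_forall fun x hx => hx.2
    calc ‖f b - f a‖ ≤ ∫ t in a..b, ‖g t‖ := h1
      _ ≤ ∫ t in a..b, K * c t := h2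
      _ = K * ∫ t in Set.Ioc a b, c t := h3
      _ ≤ K * ∫ t in Set.Iic b, c t := by
          exact mul_le_mul_of_nonneg_left h4 hK0
  -- tail integrals tend to zero along a sequence
  have hseq : Tendsto (fun k : ℕ => ∫ t in Set.Iic (-(k : ℝ)), c t) atTop (nhds 0) := by
    have hanti : Antitone fun k : ℕ => Set.Iic (-(k : ℝ)) := by
      intro k l hkl
      exact Set.Iic_subset_Iic.2 (neg_le_neg (by exact_mod_cast hkl))
    have hinter : (⋂ k : ℕ, Set.Iic (-(k : ℝ))) = ∅ := by
      ext x
      simp only [Set.mem_iInter, Set.mem_Iic, Set.mem_empty_iff_false, iff_false, not_forall,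
        not_le]
      obtain ⟨k, hk⟩ := exists_nat_gt (-x)
      exact ⟨k, by linarith⟩
    have := tendsto_setIntegral_of_antitone (f := c) (μ := volume)
      (fun k : ℕ => measurableSet_Iic) hanti
      ⟨0, by simpa using hc_int⟩
    rw [hinter] at this
    simpa using this
  -- Cauchy sequence argument
  set u : ℝ → L := fun s => f (-s) with hudef
  have hcauchy : CauchySeq u := by
    rw [Metric.cauchySeq_iff]
    intro ε hε
    have hKε : K * (ε / (K + 1)) < ε := by
      rw [mul_div_assoc']
      rw [div_lt_iff₀ (by linarith)]
      nlinarith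
    obtain ⟨k, hk⟩ := (hseq.eventually (eventually_lt_nhds (by positivity :
      (0:ℝ) < ε / (K + 1)))).exists
    refine ⟨max (k : ℝ) 0, fun m hm l hl => ?_⟩
    have hm0 : -m ≤ 0 := by
      have := le_trans (le_max_right (k:ℝ) 0) hm; linarith
    have hl0 : -l ≤ 0 := by
      have := le_trans (le_max_right (k:ℝ) 0) hl; linarith
    have hmk : -m ≤ -(k : ℝ) := by
      have := le_trans (le_max_left (k:ℝ) 0) hm; linarith
    have hlk : -l ≤ -(k : ℝ) := by
      have := le_trans (le_max_left (k:ℝ) 0) hl; linarith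
    have key : ∀ a b : ℝ, a ≤ b → b ≤ -(k:ℝ) → b ≤ 0 → ‖f b - f a‖ < ε := by
      intro a b hab hbk hb0
      have h5 : (∫ t in Set.Iic b, c t) ≤ ∫ t in Set.Iic (-(k:ℝ)), c t := by
        apply setIntegral_mono_set
          (hc_int.mono_set (Set.Iic_subset_Iic.2 (by linarith : -(k:ℝ) ≤ 0)))
        · exact Eventually.of_forall fun x => hc_nonneg x
        · exact Eventually.of_forall fun x hx => le_trans hx hbk
      calc ‖f b - f a‖ ≤ K * ∫ t in Set.Iic b, c t := hftc a b hab hb0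
        _ ≤ K * ∫ t in Set.Iic (-(k:ℝ)), c t := mul_le_mul_of_nonneg_left h5 hK0
        _ ≤ K * (ε / (K + 1)) := mul_le_mul_of_nonneg_left hk.le hK0
        _ < ε := hKε
    rw [dist_eq_norm]
    rcases le_total (-m) (-l) with h | h
    · have := key (-m) (-l) h hlk hl0
      simpa [u, norm_sub_rev] using this
    · have := key (-l) (-m) h hmk hm0
      simpa [u] using this
  obtain ⟨Λ, hΛ⟩ := cauchySeq_tendsto_of_complete hcauchy
  refine ⟨Λ, ?_⟩
  have hcomp : Tendsto (fun τ : ℝ => u (-τ)) atBot (nhds Λ) :=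
    hΛ.comp tendsto_neg_atBot_atTop
  have : (fun τ : ℝ => u (-τ)) = f := by
    funext τ; simp [u]
  rw [this] at hcomp
  have hofFn : (fun τ : ℝ => ((List.ofFn fun i => Ls i τ).prod) ω) = f := by
    funext τ
    simp [f, List.ofFn_eq_map]
  rw [hofFn]
  exact hcomp
end

section
/- Let L be a Banach space, ω ∈ L, and for i = 1,…,n let τ ↦ L_i(τ) be maps from ℝ to bounded operators on L with M := sup_{i,τ} ‖L_i(τ)‖ < ∞ and with L_i(τ)ω independent of τ. Suppose that for all i, j, ‖[L_i(τ') − L_i(τ), L_j(τ)]‖ → 0 as τ, τ' → −∞ (with |τ'−τ| arbitrary). Then the net Λ(τ_1,…,τ_n) = L_1(τ_1) ⋯ L_n(τ_n) ω is Cauchy as all τ_j → −∞, hence the limit lim_{τ_1,…,τ_n → −∞} L_1(τ_1)⋯L_n(τ_n)ω exists. -/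
open Filter



section
variable {L : Type*} [NormedAddCommGroup L] [NormedSpace ℝ L]

lemma prod_apply_norm_le (M' : ℝ) (hM' : 1 ≤ M') (l : List (L →L[ℝ] L))
    (h : ∀ A ∈ l, ‖A‖ ≤ M') (ω : L) :
    ‖l.prod ω‖ ≤ M' ^ l.length * ‖ω‖ := by
  induction l with
  | nil => simp [ContinuousLinearMap.one_apply]
  | cons A l ih =>
    have hA := h A (List.mem_cons_self ..)
    have hM0 : (0:ℝ) ≤ M' := by linarith
    have ih' := ih (fun B hB => h B (List.mem_cons_of_mem _ hB))
    calc ‖(A :: l).prod ω‖ = ‖A (l.prod ω)‖ := by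
          simp [List.prod_cons, ContinuousLinearMap.mul_apply]
      _ ≤ ‖A‖ * ‖l.prod ω‖ := A.le_opNorm _
      _ ≤ M' * (M' ^ l.length * ‖ω‖) :=
          mul_le_mul hA ih' (norm_nonneg _) hM0
      _ = M' ^ (A :: l).length * ‖ω‖ := by rw [List.length_cons, pow_succ]; ring

lemma move_comm (ω : L) (D : L →L[ℝ] L) (hD : D ω = 0) (M' δ : ℝ)
    (hM' : 1 ≤ M') (hδ : 0 ≤ δ) (l : List (L →L[ℝ] L))
    (hl : ∀ A ∈ l, ‖A‖ ≤ M' ∧ ‖D * A - A * D‖ ≤ δ) :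
    ‖D (l.prod ω)‖ ≤ l.length * δ * M' ^ l.length * ‖ω‖ := by
  induction l with
  | nil => simp [ContinuousLinearMap.one_apply, hD]
  | cons A l ih =>
    obtain ⟨hA, hcA⟩ := hl A (List.mem_cons_self ..)
    have ih' := ih (fun B hB => hl B (List.mem_cons_of_mem _ hB))
    have hprod := prod_apply_norm_le M' hM' l
      (fun B hB => (hl B (List.mem_cons_of_mem _ hB)).1) ω
    have h1 : D ((A :: l).prod ω) = A (D (l.prod ω)) + (D * A - A * D) (l.prod ω) := by
      simp [List.prod_cons, ContinuousLinearMap.mul_apply,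
        ContinuousLinearMap.sub_apply]
    have h2 : ‖D ((A :: l).prod ω)‖ ≤ M' * ‖D (l.prod ω)‖ + δ * ‖l.prod ω‖ := by
      rw [h1]
      refine le_trans (norm_add_le _ _) (add_le_add ?_ ?_)
      · exact le_trans (A.le_opNorm _) (mul_le_mul_of_nonneg_right hA (norm_nonneg _))
      · exact le_trans ((D * A - A * D).le_opNorm _)
          (mul_le_mul_of_nonneg_right hcA (norm_nonneg _))
    have hpow : M' ^ l.length ≤ M' ^ (l.length + 1) :=
      pow_le_pow_right₀ (by linarith) (Nat.le_succ _)
    have hpow0 : (0:ℝ) ≤ M' ^ l.length := by positivity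
    have hω0 : (0:ℝ) ≤ ‖ω‖ := norm_nonneg _
    have hD0 : (0:ℝ) ≤ ‖D (l.prod ω)‖ := norm_nonneg _
    calc ‖D ((A :: l).prod ω)‖ ≤ M' * (l.length * δ * M' ^ l.length * ‖ω‖)
          + δ * (M' ^ l.length * ‖ω‖) := by
          refine le_trans h2 (add_le_add ?_ ?_)
          · exact mul_le_mul_of_nonneg_left ih' (by linarith)
          · exact mul_le_mul_of_nonneg_left hprod hδ
      _ ≤ (A :: l).length * δ * M' ^ (A :: l).length * ‖ω‖ := by
          rw [List.length_cons]
          push_cast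
          rw [pow_succ]
          nlinarith [mul_nonneg (mul_nonneg (mul_nonneg hδ hpow0) hω0) (by linarith : (0:ℝ) ≤ M' - 1), mul_nonneg hδ hω0, Nat.cast_nonneg (α := ℝ) l.length]


lemma key_est (ω : L) : ∀ (n : ℕ) (Ls : Fin n → ℝ → (L →L[ℝ] L)) (M' δ : ℝ),
    1 ≤ M' → 0 ≤ δ → (∀ i τ, ‖Ls i τ‖ ≤ M') →
    (∀ i τ τ', (Ls i τ) ω = (Ls i τ') ω) →
    ∀ (τ τ' : Fin n → ℝ),
    (∀ i j, ‖(Ls i (τ' i) - Ls i (τ i)) * Ls j (τ j)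
      - Ls j (τ j) * (Ls i (τ' i) - Ls i (τ i))‖ ≤ δ) →
    ‖((List.ofFn fun i => Ls i (τ' i)).prod) ω
      - ((List.ofFn fun i => Ls i (τ i)).prod) ω‖
      ≤ (n:ℝ)^2 * δ * M' ^ n * ‖ω‖ := by
  intro n
  induction n with
  | zero =>
    intro Ls M' δ hM' hδ hb hconst τ τ' hc
    simp
  | succ m ih =>
    intro Ls M' δ hM' hδ hb hconst τ τ' hc
    set D : L →L[ℝ] L := Ls 0 (τ' 0) - Ls 0 (τ 0) with hDdef
    set l : List (L →L[ℝ] L) := List.ofFn fun i : Fin m => Ls i.succ (τ i.succ) with hldef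
    set l' : List (L →L[ℝ] L) := List.ofFn fun i : Fin m => Ls i.succ (τ' i.succ) with hl'def
    have hsplit : ∀ σ : Fin (m+1) → ℝ,
        (List.ofFn fun i => Ls i (σ i)).prod
        = Ls 0 (σ 0) * (List.ofFn fun i : Fin m => Ls i.succ (σ i.succ)).prod := by
      intro σ
      rw [List.ofFn_succ, List.prod_cons]
    have heq : ((List.ofFn fun i => Ls i (τ' i)).prod) ω
        - ((List.ofFn fun i => Ls i (τ i)).prod) ω
        = Ls 0 (τ' 0) (l'.prod ω - l.prod ω) + D (l.prod ω) := by
      rw [hsplit τ', hsplit τ]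
      simp only [ContinuousLinearMap.mul_apply, hDdef, ContinuousLinearMap.sub_apply,
        map_sub, hldef, hl'def]
      abel
    -- tail estimate by induction hypothesis
    have ihtail : ‖l'.prod ω - l.prod ω‖ ≤ (m:ℝ)^2 * δ * M' ^ m * ‖ω‖ := by
      exact ih (fun i => Ls i.succ) M' δ hM' hδ (fun i t => hb i.succ t)
        (fun i t t' => hconst i.succ t t') (fun i => τ i.succ) (fun i => τ' i.succ)
        (fun i j => hc i.succ j.succ)
    -- commutator-move estimate
    have hD0 : D ω = 0 := by
      rw [hDdef, ContinuousLinearMap.sub_apply, hconst 0 (τ' 0) (τ 0), sub_self]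
    have hmove : ‖D (l.prod ω)‖ ≤ (m:ℝ) * δ * M' ^ m * ‖ω‖ := by
      have := move_comm ω D hD0 M' δ hM' hδ l (by
        intro A hA
        rw [hldef, List.mem_ofFn] at hA
        obtain ⟨j, rfl⟩ := hA
        exact ⟨hb _ _, hc 0 j.succ⟩)
      simpa [hldef] using this
    have h1 : ‖Ls 0 (τ' 0) (l'.prod ω - l.prod ω)‖ ≤ M' * ((m:ℝ)^2 * δ * M' ^ m * ‖ω‖) := by
      refine le_trans ((Ls 0 (τ' 0)).le_opNorm _) ?_
      exact mul_le_mul (hb 0 (τ' 0)) ihtail (norm_nonneg _) (by linarith)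
    have hpow0 : (0:ℝ) ≤ M' ^ m := by positivity
    have hω0 : (0:ℝ) ≤ ‖ω‖ := norm_nonneg _
    have hm0 : (0:ℝ) ≤ (m:ℝ) := Nat.cast_nonneg m
    calc ‖((List.ofFn fun i => Ls i (τ' i)).prod) ω
        - ((List.ofFn fun i => Ls i (τ i)).prod) ω‖
        ≤ M' * ((m:ℝ)^2 * δ * M' ^ m * ‖ω‖) + (m:ℝ) * δ * M' ^ m * ‖ω‖ := by
          rw [heq]
          exact le_trans (norm_add_le _ _) (add_le_add h1 hmove)
      _ ≤ ((m:ℝ)+1)^2 * δ * M' ^ (m+1) * ‖ω‖ := by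
          have hps : M' ^ (m+1) = M' ^ m * M' := pow_succ _ _
          rw [hps]
          have a0 : (0:ℝ) ≤ δ * M' ^ m * ‖ω‖ := by positivity
          nlinarith [mul_nonneg (mul_nonneg hm0 a0) (sub_nonneg.mpr hM'),
            mul_nonneg a0 (sub_nonneg.mpr hM'), mul_nonneg hm0 a0, a0]
      _ = ((m+1:ℕ):ℝ)^2 * δ * M' ^ (m+1) * ‖ω‖ := by push_cast; ring

end

/-- If the commutators `[L_i(τ') − L_i(τ), L_j(τ)]` tend to zero in norm as
`τ, τ' → −∞`, then the net `Λ(τ_1,…,τ_n) = L_1(τ_1)⋯L_n(τ_n)ω` is Cauchy as all `τ_j → −∞`,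
hence it has a limit. -/
theorem stmt1
    {L : Type*} [NormedAddCommGroup L] [NormedSpace ℝ L] [CompleteSpace L]
    (ω : L) (n : ℕ) (Ls : Fin n → ℝ → (L →L[ℝ] L))
    (M : ℝ) (hbound : ∀ i τ, ‖Ls i τ‖ ≤ M)
    (hconst : ∀ i τ τ', (Ls i τ) ω = (Ls i τ') ω)
    (hcomm : ∀ i j, Tendsto
      (fun p : ℝ × ℝ =>
        ‖(Ls i p.1 - Ls i p.2) * Ls j p.2 - Ls j p.2 * (Ls i p.1 - Ls i p.2)‖)
      (atBot ×ˢ atBot) (nhds 0)) :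
    (∀ ε > (0 : ℝ), ∃ T : ℝ, ∀ τ τ' : Fin n → ℝ,
        (∀ j, τ j ≤ T) → (∀ j, τ' j ≤ T) →
        ‖((List.ofFn fun i => Ls i (τ' i)).prod) ω -
          ((List.ofFn fun i => Ls i (τ i)).prod) ω‖ < ε) ∧
    ∃ Λ : L, Tendsto (fun τ : Fin n → ℝ => ((List.ofFn fun i => Ls i (τ i)).prod) ω)
      (Filter.pi fun _ => atBot) (nhds Λ) := by
  set M' : ℝ := max M 1 with hM'def
  have hM' : 1 ≤ M' := le_max_right _ _
  have hb' : ∀ i τ, ‖Ls i τ‖ ≤ M' := fun i τ => le_trans (hbound i τ) (le_max_left _ _)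
  have hmain : ∀ ε > (0 : ℝ), ∃ T : ℝ, ∀ τ τ' : Fin n → ℝ,
      (∀ j, τ j ≤ T) → (∀ j, τ' j ≤ T) →
      ‖((List.ofFn fun i => Ls i (τ' i)).prod) ω -
        ((List.ofFn fun i => Ls i (τ i)).prod) ω‖ < ε := by
    intro ε hε
    set X : ℝ := ((n:ℝ)^2 + 1) * M' ^ n * (‖ω‖ + 1) with hXdef
    have hX : 0 < X := by positivity
    set δ' : ℝ := ε / (4 * X) with hδ'def
    have hδ' : 0 < δ' := by positivity
    -- all commutators are eventually < δ'
    have hev : ∀ᶠ p in (atBot ×ˢ atBot : Filter (ℝ × ℝ)), ∀ i j : Fin n,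
        ‖(Ls i p.1 - Ls i p.2) * Ls j p.2 - Ls j p.2 * (Ls i p.1 - Ls i p.2)‖ < δ' := by
      rw [eventually_all]
      intro i
      rw [eventually_all]
      intro j
      exact (hcomm i j).eventually_lt_const hδ'
    obtain ⟨s, hs, t, ht, hst⟩ := Filter.mem_prod_iff.mp hev
    obtain ⟨T1, hT1⟩ := Filter.mem_atBot_sets.mp hs
    obtain ⟨T2, hT2⟩ := Filter.mem_atBot_sets.mp ht
    refine ⟨min T1 T2, fun τ τ' hτ hτ' => ?_⟩
    have hpair : ∀ a b : ℝ, a ≤ min T1 T2 → b ≤ min T1 T2 → ∀ i j : Fin n,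
        ‖(Ls i a - Ls i b) * Ls j b - Ls j b * (Ls i a - Ls i b)‖ < δ' := by
      intro a b ha hb i j
      exact hst (Set.mk_mem_prod (hT1 a (le_trans ha (min_le_left _ _)))
        (hT2 b (le_trans hb (min_le_right _ _)))) i j
    have hc : ∀ i j : Fin n, ‖(Ls i (τ' i) - Ls i (τ i)) * Ls j (τ j)
        - Ls j (τ j) * (Ls i (τ' i) - Ls i (τ i))‖ ≤ 2 * δ' := by
      intro i j
      have hsplit : (Ls i (τ' i) - Ls i (τ i)) * Ls j (τ j)
          - Ls j (τ j) * (Ls i (τ' i) - Ls i (τ i))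
          = ((Ls i (τ' i) - Ls i (τ j)) * Ls j (τ j)
              - Ls j (τ j) * (Ls i (τ' i) - Ls i (τ j)))
            - ((Ls i (τ i) - Ls i (τ j)) * Ls j (τ j)
              - Ls j (τ j) * (Ls i (τ i) - Ls i (τ j))) := by noncomm_ring
      rw [hsplit]
      have h1 := hpair (τ' i) (τ j) (hτ' i) (hτ j) i j
      have h2 := hpair (τ i) (τ j) (hτ i) (hτ j) i j
      calc ‖_ - _‖ ≤ ‖_‖ + ‖_‖ := norm_sub_le _ _
        _ ≤ 2 * δ' := by linarith
    have hkey := key_est ω n Ls M' (2 * δ') hM' (by linarith) hb' hconst τ τ' hc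
    refine lt_of_le_of_lt hkey ?_
    have h1 : (n:ℝ)^2 * (2 * δ') * M' ^ n * ‖ω‖ ≤ 2 * δ' * X := by
      rw [hXdef]
      have hp : (0:ℝ) ≤ M' ^ n := by positivity
      have h2 : (n:ℝ)^2 * M' ^ n * ‖ω‖ ≤ ((n:ℝ)^2 + 1) * M' ^ n * (‖ω‖ + 1) := by
        have := norm_nonneg ω
        nlinarith [sq_nonneg (n:ℝ), mul_nonneg (sq_nonneg (n:ℝ)) hp]
      nlinarith
    have h3 : 2 * δ' * X = ε / 2 := by
      rw [hδ'def]
      field_simp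
      ring
    linarith
  refine ⟨hmain, ?_⟩
  set F : Filter (Fin n → ℝ) := Filter.pi fun _ => atBot with hFdef
  set f : (Fin n → ℝ) → L := fun τ => ((List.ofFn fun i => Ls i (τ i)).prod) ω with hfdef
  have hFne : F.NeBot := by rw [hFdef]; infer_instance
  have hcauchy : Cauchy (Filter.map f F) := by
    rw [Metric.cauchy_iff]
    refine ⟨Filter.map_neBot, fun ε hε => ?_⟩
    obtain ⟨T, hT⟩ := hmain ε hε
    refine ⟨f '' {τ | ∀ j, τ j ≤ T}, ?_, ?_⟩
    · apply Filter.image_mem_map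
      have hset : {τ : Fin n → ℝ | ∀ j, τ j ≤ T}
          = ⋂ j, Function.eval j ⁻¹' Set.Iic T := by
        ext x; simp [Set.mem_iInter]
      rw [hset, hFdef]
      exact (Filter.iInter_mem).mpr fun j => Filter.mem_pi_of_mem j (Filter.Iic_mem_atBot T)
    · rintro x ⟨τ', hτ', rfl⟩ y ⟨τ, hτ, rfl⟩
      rw [dist_eq_norm]
      exact hT τ τ' hτ hτ'
  obtain ⟨Λ, hΛ⟩ := CompleteSpace.complete hcauchy
  exact ⟨Λ, hΛ⟩
end

section
/- Under the hypotheses of the previous setup (Banach space L, ω ∈ L, uniformly bounded operator families L_i(τ) with L_i(τ)ω constant), if for all i ≠ j one has ‖[L_i(τ), L_j(τ)]‖ → 0 as τ → −∞, and the limits Λ_π = lim_{τ→−∞} L_{π(1)}(τ)⋯L_{π(n)}(τ)ω exist for every permutation π of {1,…,n}, then all these limits are equal; i.e., the in-state is symmetric under permutation of the factors. -/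
open Filter

private lemma prod_bound {L : Type*} [NormedAddCommGroup L] [NormedSpace ℝ L]
    {n : ℕ} (Ls : Fin n → ℝ → (L →L[ℝ] L)) (C : ℝ) (hC1 : 1 ≤ C)
    (hb : ∀ i τ, ‖Ls i τ‖ ≤ C) (l : List (Fin n)) (τ : ℝ) :
    ‖(l.map (fun i => Ls i τ)).prod‖ ≤ C ^ l.length := by
  induction l with
  | nil =>
      simp only [List.map_nil, List.prod_nil, List.length_nil, pow_zero]
      calc ‖(1 : L →L[ℝ] L)‖ ≤ 1 := by
            rw [ContinuousLinearMap.one_def]; exact ContinuousLinearMap.norm_id_le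
        _ = 1 := rfl
  | cons a t ih =>
      calc ‖((a :: t).map (fun i => Ls i τ)).prod‖
          ≤ ‖Ls a τ‖ * ‖(t.map (fun i => Ls i τ)).prod‖ := by
            simp [List.prod_cons]; exact norm_mul_le _ _
        _ ≤ C * C ^ t.length := by
            apply mul_le_mul (hb a τ) ih (norm_nonneg _) (le_trans zero_le_one hC1)
        _ = C ^ (a :: t).length := by ring_nf; simp [pow_succ, mul_comm]

private lemma key_perm {L : Type*} [NormedAddCommGroup L] [NormedSpace ℝ L]
    {n : ℕ} (Ls : Fin n → ℝ → (L →L[ℝ] L)) (C : ℝ) (hC1 : 1 ≤ C)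
    (hb : ∀ i τ, ‖Ls i τ‖ ≤ C)
    (hcomm : ∀ i j, i ≠ j → Tendsto
      (fun τ : ℝ => ‖Ls i τ * Ls j τ - Ls j τ * Ls i τ‖) atBot (nhds 0))
    {l l' : List (Fin n)} (hp : l.Perm l') (hnd : l.Nodup) :
    Tendsto (fun τ : ℝ =>
      ‖(l.map (fun i => Ls i τ)).prod - (l'.map (fun i => Ls i τ)).prod‖) atBot (nhds 0) := by
  induction hp with
  | nil => simpa using tendsto_const_nhds
  | cons a hp ih =>
      rename_i l₁ l₂
      have hnd' : l₁.Nodup := (List.nodup_cons.mp hnd).2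
      have := ih hnd'
      have hle : ∀ τ : ℝ, ‖((a :: l₁).map (fun i => Ls i τ)).prod -
          ((a :: l₂).map (fun i => Ls i τ)).prod‖ ≤
          C * ‖(l₁.map (fun i => Ls i τ)).prod - (l₂.map (fun i => Ls i τ)).prod‖ := by
        intro τ
        have : ((a :: l₁).map (fun i => Ls i τ)).prod -
            ((a :: l₂).map (fun i => Ls i τ)).prod =
            Ls a τ * ((l₁.map (fun i => Ls i τ)).prod - (l₂.map (fun i => Ls i τ)).prod) := by
          simp [List.prod_cons, mul_sub]
        rw [this]
        calc ‖_‖ ≤ ‖Ls a τ‖ * ‖_‖ := norm_mul_le _ _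
          _ ≤ C * _ := by
              apply mul_le_mul_of_nonneg_right (hb a τ) (norm_nonneg _)
      apply squeeze_zero (fun τ => norm_nonneg _) hle
      have : Tendsto (fun τ : ℝ => C *
          ‖(l₁.map (fun i => Ls i τ)).prod - (l₂.map (fun i => Ls i τ)).prod‖) atBot
          (nhds (C * 0)) := this.const_mul C
      simpa using this
  | swap a b t =>
      have hab : b ≠ a := by
        have := (List.nodup_cons.mp hnd).1
        intro h; subst h; simp at this
      have hle : ∀ τ : ℝ, ‖((b :: a :: t).map (fun i => Ls i τ)).prod -
          ((a :: b :: t).map (fun i => Ls i τ)).prod‖ ≤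
          ‖Ls b τ * Ls a τ - Ls a τ * Ls b τ‖ * C ^ t.length := by
        intro τ
        have : ((b :: a :: t).map (fun i => Ls i τ)).prod -
            ((a :: b :: t).map (fun i => Ls i τ)).prod =
            (Ls b τ * Ls a τ - Ls a τ * Ls b τ) * (t.map (fun i => Ls i τ)).prod := by
          simp [List.prod_cons, sub_mul, mul_assoc]
        rw [this]
        calc ‖_‖ ≤ ‖Ls b τ * Ls a τ - Ls a τ * Ls b τ‖ * ‖(t.map (fun i => Ls i τ)).prod‖ :=
              norm_mul_le _ _
          _ ≤ _ := by
              apply mul_le_mul_of_nonneg_left (prod_bound Ls C hC1 hb t τ) (norm_nonneg _)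
      apply squeeze_zero (fun τ => norm_nonneg _) hle
      have := (hcomm b a hab).mul_const (C ^ t.length)
      simpa using this
  | trans h1 h2 ih1 ih2 =>
      rename_i l₁ l₂ l₃
      have hnd2 : l₂.Nodup := h1.nodup_iff.mp hnd
      have t1 := ih1 hnd
      have t2 := ih2 hnd2
      exact squeeze_zero (fun τ => norm_nonneg _)
        (fun τ => norm_sub_le_norm_sub_add_norm_sub _ _ _)
        (by simpa using t1.add t2)

/-- If `‖[L_i(τ), L_j(τ)]‖ → 0` as `τ → −∞` for `i ≠ j`, and for every
permutation `π` the limit `Λ_π = lim_{τ→−∞} L_{π(1)}(τ)⋯L_{π(n)}(τ)ω` exists, then all these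
limits coincide: the in-state is symmetric. -/
theorem stmt2
    {L : Type*} [NormedAddCommGroup L] [NormedSpace ℝ L] [CompleteSpace L]
    (ω : L) (n : ℕ) (Ls : Fin n → ℝ → (L →L[ℝ] L))
    (M : ℝ) (hbound : ∀ i τ, ‖Ls i τ‖ ≤ M)
    (hconst : ∀ i τ τ', (Ls i τ) ω = (Ls i τ') ω)
    (hcomm : ∀ i j, i ≠ j → Tendsto
      (fun τ : ℝ => ‖Ls i τ * Ls j τ - Ls j τ * Ls i τ‖) atBot (nhds 0))
    (Λ : Equiv.Perm (Fin n) → L)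
    (hΛ : ∀ π : Equiv.Perm (Fin n),
      Tendsto (fun τ : ℝ => ((List.ofFn fun i => Ls (π i) τ).prod) ω) atBot (nhds (Λ π))) :
    ∀ π π' : Equiv.Perm (Fin n), Λ π = Λ π' := by
  intro π π'
  set C := max M 1 with hCdef
  have hC1 : 1 ≤ C := le_max_right _ _
  have hb : ∀ i τ, ‖Ls i τ‖ ≤ C := fun i τ => (hbound i τ).trans (le_max_left _ _)
  -- the lists of indices
  have hperm : (List.ofFn π).Perm (List.ofFn π') := by
    apply List.perm_of_nodup_nodup_toFinset_eq
    · exact (List.nodup_ofFn).mpr π.injective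
    · exact (List.nodup_ofFn).mpr π'.injective
    · apply Finset.ext
      intro i
      simp [List.mem_ofFn, π.surjective i, π'.surjective i]
  have hnd : (List.ofFn π).Nodup := (List.nodup_ofFn).mpr π.injective
  have key := key_perm Ls C hC1 hb hcomm hperm hnd
  -- rewrite ofFn of composition as map
  have hmap : ∀ (σ : Equiv.Perm (Fin n)) (τ : ℝ),
      (List.ofFn fun i => Ls (σ i) τ) = (List.ofFn σ).map (fun i => Ls i τ) := by
    intro σ τ; rw [List.map_ofFn]; rfl
  have hdiff : Tendsto (fun τ : ℝ =>
      ((List.ofFn fun i => Ls (π i) τ).prod) ω - ((List.ofFn fun i => Ls (π' i) τ).prod) ω)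
      atBot (nhds 0) := by
    rw [tendsto_zero_iff_norm_tendsto_zero]
    apply squeeze_zero (g := fun τ : ℝ => ‖((List.ofFn π).map (fun i => Ls i τ)).prod -
        ((List.ofFn π').map (fun i => Ls i τ)).prod‖ * ‖ω‖) (fun τ => norm_nonneg _)
      (fun τ => ?_) (by simpa using key.mul_const ‖ω‖)
    rw [hmap π τ, hmap π' τ, ← ContinuousLinearMap.sub_apply]
    exact ContinuousLinearMap.le_opNorm _ _
  have := ((hΛ π).sub (hΛ π')).sub hdiff
  simp only [sub_self] at this
  have huniq : Λ π - Λ π' - 0 = 0 := tendsto_nhds_unique this tendsto_const_nhds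
  have : Λ π - Λ π' = 0 := by simpa using huniq
  exact sub_eq_zero.mp this
end

section
/- Let L be a Banach space, ω ∈ L, and let A, B : ℝ → B(L) be two uniformly bounded operator families with A(τ)ω = B(τ)ω for all τ (both constant in τ). Suppose L_2,…,L_n : ℝ → B(L) are uniformly bounded families with L_j(τ)ω constant, and that all pairwise commutators among {A(τ), B(τ), L_2(τ),…,L_n(τ)} tend to 0 in norm as τ → −∞. If both limits lim_{τ→−∞} A(τ)L_2(τ)⋯L_n(τ)ω and lim_{τ→−∞} B(τ)L_2(τ)⋯L_n(τ)ω exist, then they are equal. (The in-state does not depend on the choice of the operator realization.) -/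
open Filter

lemma prod_norm_le {L : Type*} [NormedAddCommGroup L] [NormedSpace ℝ L]
    (C : ℝ) (hC : 1 ≤ C) :
    ∀ l : List (L →L[ℝ] L), (∀ x ∈ l, ‖x‖ ≤ C) → ‖l.prod‖ ≤ C ^ l.length
  | [], _ => by
      simpa using (show ‖(1 : L →L[ℝ] L)‖ ≤ 1 from ContinuousLinearMap.norm_id_le)
  | x :: l, h => by
      have ih := prod_norm_le C hC l (fun y hy => h y (List.mem_cons_of_mem _ hy))
      have hx : ‖x‖ ≤ C := h x List.mem_cons_self
      have h0 : (0:ℝ) ≤ C := le_trans zero_le_one hC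
      calc ‖(x :: l).prod‖ = ‖x * l.prod‖ := by rw [List.prod_cons]
        _ ≤ ‖x‖ * ‖l.prod‖ := norm_mul_le _ _
        _ ≤ C * C ^ l.length := mul_le_mul hx ih (norm_nonneg _) h0
        _ = C ^ (x :: l).length := by rw [List.length_cons, pow_succ']

lemma comm_prod_bound {L : Type*} [NormedAddCommGroup L] [NormedSpace ℝ L]
    (A : L →L[ℝ] L) (C : ℝ) (hC : 1 ≤ C) :
    ∀ l : List (L →L[ℝ] L), (∀ x ∈ l, ‖x‖ ≤ C) →
      ‖A * l.prod - l.prod * A‖ ≤ (l.map fun x => ‖A * x - x * A‖).sum * C ^ l.length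
  | [], _ => by simp
  | x :: l, h => by
      have ih := comm_prod_bound A C hC l (fun y hy => h y (List.mem_cons_of_mem _ hy))
      have hx : ‖x‖ ≤ C := h x List.mem_cons_self
      have h0 : (0:ℝ) ≤ C := le_trans zero_le_one hC
      have hprod : ‖l.prod‖ ≤ C ^ l.length :=
        prod_norm_le C hC l (fun y hy => h y (List.mem_cons_of_mem _ hy))
      have key : A * (x :: l).prod - (x :: l).prod * A
          = (A * x - x * A) * l.prod + x * (A * l.prod - l.prod * A) := by
        rw [List.prod_cons]; noncomm_ring
      have hsum0 : (0:ℝ) ≤ (l.map fun y => ‖A * y - y * A‖).sum :=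
        List.sum_nonneg fun a ha => by
          obtain ⟨y, _, rfl⟩ := List.mem_map.mp ha
          exact norm_nonneg _
      calc ‖A * (x :: l).prod - (x :: l).prod * A‖
          ≤ ‖(A * x - x * A) * l.prod‖ + ‖x * (A * l.prod - l.prod * A)‖ := by
            rw [key]; exact norm_add_le _ _
        _ ≤ ‖A * x - x * A‖ * ‖l.prod‖ + ‖x‖ * ‖A * l.prod - l.prod * A‖ :=
            add_le_add (norm_mul_le _ _) (norm_mul_le _ _)
        _ ≤ ‖A * x - x * A‖ * C ^ l.length
            + C * ((l.map fun y => ‖A * y - y * A‖).sum * C ^ l.length) := by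
            gcongr
        _ ≤ (((x :: l).map fun y => ‖A * y - y * A‖).sum) * C ^ (x :: l).length := by
            rw [List.map_cons, List.sum_cons, List.length_cons]
            have hCpow : C ^ l.length ≤ C ^ (l.length + 1) :=
              pow_le_pow_right₀ hC (Nat.le_succ _)
            calc ‖A * x - x * A‖ * C ^ l.length
                  + C * ((l.map fun y => ‖A * y - y * A‖).sum * C ^ l.length)
                = ‖A * x - x * A‖ * C ^ l.length
                  + (l.map fun y => ‖A * y - y * A‖).sum * C ^ (l.length + 1) := by ring
              _ ≤ ‖A * x - x * A‖ * C ^ (l.length + 1)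
                  + (l.map fun y => ‖A * y - y * A‖).sum * C ^ (l.length + 1) := by
                  gcongr
              _ = (‖A * x - x * A‖ + (l.map fun y => ‖A * y - y * A‖).sum) * C ^ (l.length + 1) := by
                  ring

/-- Independence of the in-state of the choice of the operator realization:
if `A(τ)ω = B(τ)ω` and all pairwise commutators among `{A, B, L_2, …, L_n}` tend to `0`
as `τ → −∞`, then the two limits coincide. -/
theorem stmt3
    {L : Type*} [NormedAddCommGroup L] [NormedSpace ℝ L] [CompleteSpace L]
    (ω : L) (n : ℕ) (A B : ℝ → (L →L[ℝ] L)) (Ls : Fin n → ℝ → (L →L[ℝ] L))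
    (M : ℝ) (hboundA : ∀ τ, ‖A τ‖ ≤ M) (hboundB : ∀ τ, ‖B τ‖ ≤ M)
    (hbound : ∀ j τ, ‖Ls j τ‖ ≤ M)
    (hAB : ∀ τ, A τ ω = B τ ω)
    (hAconst : ∀ τ τ', A τ ω = A τ' ω)
    (hconst : ∀ j τ τ', Ls j τ ω = Ls j τ' ω)
    (hcommAB : Tendsto (fun τ : ℝ => ‖A τ * B τ - B τ * A τ‖) atBot (nhds 0))
    (hcommA : ∀ j, Tendsto (fun τ : ℝ => ‖A τ * Ls j τ - Ls j τ * A τ‖) atBot (nhds 0))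
    (hcommB : ∀ j, Tendsto (fun τ : ℝ => ‖B τ * Ls j τ - Ls j τ * B τ‖) atBot (nhds 0))
    (hcommL : ∀ i j, i ≠ j →
      Tendsto (fun τ : ℝ => ‖Ls i τ * Ls j τ - Ls j τ * Ls i τ‖) atBot (nhds 0))
    (ΛA ΛB : L)
    (hΛA : Tendsto (fun τ : ℝ => (A τ * (List.ofFn fun j => Ls j τ).prod) ω) atBot (nhds ΛA))
    (hΛB : Tendsto (fun τ : ℝ => (B τ * (List.ofFn fun j => Ls j τ).prod) ω) atBot (nhds ΛB)) :
    ΛA = ΛB := by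
  set C : ℝ := max M 1 with hCdef
  have hC : 1 ≤ C := le_max_right _ _
  set P : ℝ → (L →L[ℝ] L) := fun τ => (List.ofFn fun j => Ls j τ).prod with hP
  have hmem : ∀ τ, ∀ x ∈ (List.ofFn fun j => Ls j τ), ‖x‖ ≤ C := by
    intro τ x hx
    rw [List.mem_ofFn] at hx
    obtain ⟨j, rfl⟩ := hx
    exact le_trans (hbound j τ) (le_max_left _ _)
  -- commutator bound with P
  have hcomm : ∀ (X : ℝ → (L →L[ℝ] L)),
      (∀ j, Tendsto (fun τ : ℝ => ‖X τ * Ls j τ - Ls j τ * X τ‖) atBot (nhds 0)) →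
      Tendsto (fun τ : ℝ => ‖X τ * P τ - P τ * X τ‖) atBot (nhds 0) := by
    intro X hX
    have hb : ∀ τ, ‖X τ * P τ - P τ * X τ‖
        ≤ (∑ j, ‖X τ * Ls j τ - Ls j τ * X τ‖) * C ^ n := by
      intro τ
      have := comm_prod_bound (X τ) C hC (List.ofFn fun j => Ls j τ) (hmem τ)
      simpa [List.map_ofFn, List.sum_ofFn, Function.comp] using this
    have hsum : Tendsto (fun τ : ℝ => (∑ j, ‖X τ * Ls j τ - Ls j τ * X τ‖) * C ^ n)
        atBot (nhds 0) := by
      have : Tendsto (fun τ : ℝ => ∑ j, ‖X τ * Ls j τ - Ls j τ * X τ‖) atBot (nhds 0) := by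
        have := tendsto_finset_sum Finset.univ (fun j _ => hX j)
        simpa using this
      simpa using this.mul_const (C ^ n)
    exact squeeze_zero (fun τ => norm_nonneg _) hb hsum
  have hcA := hcomm A hcommA
  have hcB := hcomm B hcommB
  -- the difference of the two vector families tends to 0
  have hdiff : Tendsto (fun τ : ℝ => (A τ * P τ) ω - (B τ * P τ) ω) atBot (nhds 0) := by
    have hb : ∀ τ, ‖(A τ * P τ) ω - (B τ * P τ) ω‖
        ≤ (‖A τ * P τ - P τ * A τ‖ + ‖B τ * P τ - P τ * B τ‖) * ‖ω‖ := by
      intro τ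
      have hv : (A τ * P τ) ω - (B τ * P τ) ω
          = ((A τ * P τ - P τ * A τ) - (B τ * P τ - P τ * B τ)) ω := by
        simp only [ContinuousLinearMap.sub_apply, ContinuousLinearMap.mul_apply]
        rw [hAB τ]
        abel
      rw [hv]
      calc ‖((A τ * P τ - P τ * A τ) - (B τ * P τ - P τ * B τ)) ω‖
          ≤ ‖(A τ * P τ - P τ * A τ) - (B τ * P τ - P τ * B τ)‖ * ‖ω‖ :=
            ContinuousLinearMap.le_opNorm _ _
        _ ≤ (‖A τ * P τ - P τ * A τ‖ + ‖B τ * P τ - P τ * B τ‖) * ‖ω‖ := by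
            gcongr; exact norm_sub_le _ _
    have hlim : Tendsto (fun τ : ℝ =>
        (‖A τ * P τ - P τ * A τ‖ + ‖B τ * P τ - P τ * B τ‖) * ‖ω‖) atBot (nhds 0) := by
      simpa using (hcA.add hcB).mul_const ‖ω‖
    have := squeeze_zero (fun τ => norm_nonneg _) hb hlim
    exact tendsto_zero_iff_norm_tendsto_zero.mpr this
  have h2 : Tendsto (fun τ : ℝ => (A τ * P τ) ω - (B τ * P τ) ω) atBot (nhds (ΛA - ΛB)) :=
    hΛA.sub hΛB
  have := tendsto_nhds_unique h2 hdiff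
  exact sub_eq_zero.mp this
end

section
/- Let H be a Hilbert space, θ ∈ H a unit vector, and B_1,…,B_n : ℝ → B(H) continuously differentiable uniformly bounded operator families such that B_i(τ)θ is independent of τ. If there is an integrable function c with ‖[B_i'(τ), B_j(τ)]‖ ≤ c(τ) for all i,j and τ ≤ 0, then Ψ(τ) = B_1(τ)⋯B_n(τ)θ converges in H as τ → −∞. -/
open Filter MeasureTheory

/-- Auxiliary: the formal derivative of a product of operator families, defined recursively. -/
noncomputable def derivSumAux {ι A : Type*} [Ring A] (B B' : ι → ℝ → A) :
    List ι → ℝ → A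
  | [], _ => 0
  | i :: L, τ => B' i τ * (L.map (fun j => B j τ)).prod + B i τ * derivSumAux B B' L τ

set_option maxHeartbeats 1600000 in
/-- Hilbert-space version: `Ψ(τ) = B_1(τ)⋯B_n(τ)θ` converges as `τ → −∞`
under a summable commutator bound `‖[B_i'(τ), B_j(τ)]‖ ≤ c(τ)` for `τ ≤ 0`. -/
theorem stmt5
    {H : Type*} [NormedAddCommGroup H] [InnerProductSpace ℂ H] [CompleteSpace H]
    (θ : H) (hθ : ‖θ‖ = 1) (n : ℕ) (B B' : Fin n → ℝ → (H →L[ℂ] H))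
    (hderiv : ∀ i τ, HasDerivAt (B i) (B' i τ) τ)
    (hcont : ∀ i, Continuous (B' i))
    (hconst : ∀ i τ τ', (B i τ) θ = (B i τ') θ)
    (M : ℝ) (hbound : ∀ i τ, ‖B i τ‖ ≤ M)
    (c : ℝ → ℝ) (hc_nonneg : ∀ τ, 0 ≤ c τ)
    (hc_int : IntegrableOn c (Set.Iic (0 : ℝ)))
    (hcomm : ∀ i j τ, τ ≤ 0 →
      ‖B' i τ * B j τ - B j τ * B' i τ‖ ≤ c τ) :
    ∃ Ψ : H, Tendsto (fun τ : ℝ => ((List.ofFn fun i => B i τ).prod) θ) atBot (nhds Ψ) := by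
  classical
  set M₁ : ℝ := max M 1 with hM₁def
  have hM₁1 : (1 : ℝ) ≤ M₁ := le_max_right _ _
  have hM₁0 : (0 : ℝ) ≤ M₁ := by linarith
  have hMM₁ : M ≤ M₁ := le_max_left _ _
  have hbound' : ∀ i τ, ‖B i τ‖ ≤ M₁ := fun i τ => (hbound i τ).trans hMM₁
  -- evaluation at θ as a real-linear continuous map
  set eθ : (H →L[ℂ] H) →L[ℝ] H :=
    ((ContinuousLinearMap.apply ℂ H θ)).restrictScalars ℝ with heθ
  have heθ_apply : ∀ A : H →L[ℂ] H, eθ A = A θ := fun A => rfl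
  -- B' i τ θ = 0
  have hB'θ : ∀ i τ, B' i τ θ = 0 := by
    intro i τ
    have h1 : HasDerivAt (fun t => (B i t) θ) ((B' i τ) θ) τ := by
      have := (hasDerivAt_const τ eθ).clm_apply (hderiv i τ)
      simpa [heθ_apply] using this
    have h2 : (fun t => (B i t) θ) = fun _ => (B i τ) θ := funext fun t => hconst i t τ
    rw [h2] at h1
    exact h1.unique (hasDerivAt_const τ _)
  -- norm bound for partial products
  have normP : ∀ (L : List (Fin n)) (τ : ℝ),
      ‖(L.map (fun j => B j τ)).prod‖ ≤ M₁ ^ L.length := by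
    intro L τ
    induction L with
    | nil =>
      have h1 : ‖(1 : H →L[ℂ] H)‖ ≤ 1 := ContinuousLinearMap.norm_id_le
      simpa using h1
    | cons j L ih =>
      simp only [List.map_cons, List.prod_cons, List.length_cons, pow_succ]
      calc ‖B j τ * (L.map (fun j => B j τ)).prod‖
          ≤ ‖B j τ‖ * ‖(L.map (fun j => B j τ)).prod‖ := norm_mul_le _ _
        _ ≤ M₁ * M₁ ^ L.length := by
            apply mul_le_mul (hbound' j τ) ih (norm_nonneg _) hM₁0
        _ = M₁ ^ L.length * M₁ := by ring
  have normPθ : ∀ (L : List (Fin n)) (τ : ℝ),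
      ‖(L.map (fun j => B j τ)).prod θ‖ ≤ M₁ ^ L.length := by
    intro L τ
    calc ‖(L.map (fun j => B j τ)).prod θ‖
        ≤ ‖(L.map (fun j => B j τ)).prod‖ * ‖θ‖ := ContinuousLinearMap.le_opNorm _ _
      _ ≤ M₁ ^ L.length := by rw [hθ, mul_one]; exact normP L τ
  -- commuting B' i through a product applied to θ
  have bound1 : ∀ (L : List (Fin n)) (τ : ℝ), τ ≤ 0 → ∀ i : Fin n,
      ‖(B' i τ) ((L.map (fun j => B j τ)).prod θ)‖ ≤ L.length * c τ * M₁ ^ L.length := by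
    intro L τ hτ i
    induction L with
    | nil => simp [hB'θ i τ]
    | cons j L ih =>
      have key : (B' i τ) ((B j τ) ((L.map (fun k => B k τ)).prod θ))
          = (B' i τ * B j τ - B j τ * B' i τ) ((L.map (fun k => B k τ)).prod θ)
            + (B j τ) ((B' i τ) ((L.map (fun k => B k τ)).prod θ)) := by
        simp [ContinuousLinearMap.sub_apply, ContinuousLinearMap.mul_apply]
      simp only [List.map_cons, List.prod_cons, List.length_cons,
        ContinuousLinearMap.mul_apply]
      rw [key]
      have t1 : ‖(B' i τ * B j τ - B j τ * B' i τ) ((L.map (fun k => B k τ)).prod θ)‖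
          ≤ c τ * M₁ ^ L.length := by
        calc ‖(B' i τ * B j τ - B j τ * B' i τ) ((L.map (fun k => B k τ)).prod θ)‖
            ≤ ‖B' i τ * B j τ - B j τ * B' i τ‖ * ‖(L.map (fun k => B k τ)).prod θ‖ :=
              ContinuousLinearMap.le_opNorm _ _
          _ ≤ c τ * M₁ ^ L.length :=
              mul_le_mul (hcomm i j τ hτ) (normPθ L τ) (norm_nonneg _) (hc_nonneg τ)
      have t2 : ‖(B j τ) ((B' i τ) ((L.map (fun k => B k τ)).prod θ))‖
          ≤ M₁ * (L.length * c τ * M₁ ^ L.length) := by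
        calc ‖(B j τ) ((B' i τ) ((L.map (fun k => B k τ)).prod θ))‖
            ≤ ‖B j τ‖ * ‖(B' i τ) ((L.map (fun k => B k τ)).prod θ)‖ :=
              ContinuousLinearMap.le_opNorm _ _
          _ ≤ M₁ * (L.length * c τ * M₁ ^ L.length) :=
              mul_le_mul (hbound' j τ) ih (norm_nonneg _) hM₁0
      have hp : (1 : ℝ) ≤ M₁ ^ L.length := one_le_pow₀ hM₁1
      refine (norm_add_le _ _).trans ((add_le_add t1 t2).trans ?_)
      rw [pow_succ]
      have e1 : c τ * M₁ ^ L.length ≤ c τ * M₁ ^ L.length * M₁ :=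
        le_mul_of_one_le_right (mul_nonneg (hc_nonneg τ) (pow_nonneg hM₁0 _)) hM₁1
      have e2 : M₁ * ((L.length:ℝ) * c τ * M₁ ^ L.length)
          = (L.length:ℝ) * c τ * (M₁ ^ L.length * M₁) := by ring
      have e3 : ((L.length:ℝ)+1) * c τ * (M₁ ^ L.length * M₁)
          = (L.length:ℝ) * c τ * (M₁ ^ L.length * M₁) + c τ * M₁ ^ L.length * M₁ := by ring
      push_cast
      linarith [e1, e2.le, e2.ge, e3.le, e3.ge]
  -- bound for derivSumAux applied to θ
  have bound2 : ∀ (L : List (Fin n)), L.length ≤ n → ∀ (τ : ℝ), τ ≤ 0 →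
      ‖(derivSumAux B B' L τ) θ‖
        ≤ L.length * (n * c τ * M₁ ^ n) * M₁ ^ L.length := by
    intro L
    induction L with
    | nil => intro _ τ _; simp [derivSumAux]
    | cons i L ih =>
      intro hlen τ hτ
      have hLn : L.length ≤ n := le_trans (Nat.le_succ _) hlen
      have hE0 : (0:ℝ) ≤ (n:ℝ) * c τ * M₁ ^ n :=
        mul_nonneg (mul_nonneg (Nat.cast_nonneg n) (hc_nonneg τ)) (pow_nonneg hM₁0 n)
      have hp1 : (1 : ℝ) ≤ M₁ ^ L.length := one_le_pow₀ hM₁1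
      have hpn : M₁ ^ L.length ≤ M₁ ^ n := pow_le_pow_right₀ hM₁1 hLn
      have t1 : ‖(B' i τ) ((L.map (fun j => B j τ)).prod θ)‖ ≤ (n:ℝ) * c τ * M₁ ^ n := by
        refine (bound1 L τ hτ i).trans ?_
        have h1 : (L.length : ℝ) ≤ (n : ℝ) := by exact_mod_cast hLn
        have := mul_le_mul (mul_le_mul_of_nonneg_right h1 (hc_nonneg τ)) hpn
          (le_trans zero_le_one hp1) (mul_nonneg (Nat.cast_nonneg n) (hc_nonneg τ))
        linarith
      have t2 : ‖(B i τ) ((derivSumAux B B' L τ) θ)‖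
          ≤ M₁ * (L.length * ((n:ℝ) * c τ * M₁ ^ n) * M₁ ^ L.length) := by
        calc ‖(B i τ) ((derivSumAux B B' L τ) θ)‖
            ≤ ‖B i τ‖ * ‖(derivSumAux B B' L τ) θ‖ := ContinuousLinearMap.le_opNorm _ _
          _ ≤ M₁ * (L.length * ((n:ℝ) * c τ * M₁ ^ n) * M₁ ^ L.length) :=
              mul_le_mul (hbound' i τ) (ih hLn τ hτ) (norm_nonneg _) hM₁0
      have hsplit : (derivSumAux B B' (i :: L) τ) θ
          = (B' i τ) ((L.map (fun j => B j τ)).prod θ)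
            + (B i τ) ((derivSumAux B B' L τ) θ) := by
        simp [derivSumAux, ContinuousLinearMap.add_apply, ContinuousLinearMap.mul_apply]
      rw [hsplit]
      refine (norm_add_le _ _).trans ((add_le_add t1 t2).trans ?_)
      simp only [List.length_cons, pow_succ]
      have h1M : (1:ℝ) ≤ M₁ ^ L.length * M₁ := by nlinarith
      have e1 : (n:ℝ) * c τ * M₁ ^ n ≤ ((n:ℝ) * c τ * M₁ ^ n) * (M₁ ^ L.length * M₁) :=
        le_mul_of_one_le_right hE0 h1M
      have e2 : M₁ * ((L.length:ℝ) * ((n:ℝ) * c τ * M₁ ^ n) * M₁ ^ L.length)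
          = (L.length:ℝ) * ((n:ℝ) * c τ * M₁ ^ n) * (M₁ ^ L.length * M₁) := by ring
      have e3 : ((L.length:ℝ)+1) * ((n:ℝ) * c τ * M₁ ^ n) * (M₁ ^ L.length * M₁)
          = (L.length:ℝ) * ((n:ℝ) * c τ * M₁ ^ n) * (M₁ ^ L.length * M₁)
            + ((n:ℝ) * c τ * M₁ ^ n) * (M₁ ^ L.length * M₁) := by ring
      push_cast
      linarith [e1, e2.le, e2.ge, e3.le, e3.ge]
  -- derivative of the product
  have hasDerivP : ∀ (L : List (Fin n)) (τ : ℝ),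
      HasDerivAt (fun t => ((L.map (fun j => B j t)).prod)) (derivSumAux B B' L τ) τ := by
    intro L τ
    induction L with
    | nil => simp only [List.map_nil, List.prod_nil, derivSumAux]; exact hasDerivAt_const τ 1
    | cons i L ih =>
      simp only [List.map_cons, List.prod_cons]
      exact (hderiv i τ).mul ih
  -- continuity pieces
  have contB : ∀ i, Continuous (B i) := by
    intro i
    exact continuous_iff_continuousAt.2 fun τ => (hderiv i τ).continuousAt
  have contP : ∀ (L : List (Fin n)), Continuous (fun t => ((L.map (fun j => B j t)).prod)) := by
    intro L
    induction L with
    | nil => simpa using continuous_const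
    | cons i L ih =>
      simp only [List.map_cons, List.prod_cons]
      exact (contB i).mul ih
  have contD : ∀ (L : List (Fin n)), Continuous (fun t => derivSumAux B B' L t) := by
    intro L
    induction L with
    | nil => simpa [derivSumAux] using continuous_const
    | cons i L ih =>
      simp only [derivSumAux]
      exact ((hcont i).mul (contP L)).add ((contB i).mul ih)
  -- the function and its derivative
  set g : ℝ → H := fun τ => (derivSumAux B B' (List.finRange n) τ) θ with hg
  have contg : Continuous g := (contD (List.finRange n)).clm_apply continuous_const
  have hΨderiv : ∀ τ : ℝ, HasDerivAt
      (fun t : ℝ => ((List.ofFn fun i => B i t).prod) θ) (g τ) τ := by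
    intro τ
    have h1 : (fun t : ℝ => ((List.ofFn fun i => B i t).prod) θ)
        = fun t : ℝ => (((List.finRange n).map (fun j => B j t)).prod) θ := by
      funext t; rw [List.ofFn_eq_map]
    rw [h1]
    have := (hasDerivAt_const τ eθ).clm_apply (hasDerivP (List.finRange n) τ)
    simpa [heθ_apply, hg] using this
  -- integrability of g on Iic 0
  have hgbound : ∀ τ : ℝ, τ ≤ 0 → ‖g τ‖ ≤ (n * (n * M₁ ^ n) * M₁ ^ n) * c τ := by
    intro τ hτ
    have := bound2 (List.finRange n) (by simp) τ hτ
    simp only [List.length_finRange] at this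
    calc ‖g τ‖ ≤ (n : ℝ) * ((n:ℝ) * c τ * M₁ ^ n) * M₁ ^ n := this
      _ = (n * (n * M₁ ^ n) * M₁ ^ n) * c τ := by ring
  have hgint : IntegrableOn g (Set.Iic (0 : ℝ)) := by
    refine Integrable.mono' (hc_int.const_mul (n * (n * M₁ ^ n) * M₁ ^ n))
      contg.aestronglyMeasurable.restrict ?_
    rw [ae_restrict_iff' measurableSet_Iic]
    exact Filter.Eventually.of_forall fun τ hτ => hgbound τ hτ
  -- FTC
  have hFTC : ∀ τ : ℝ, ((List.ofFn fun i => B i τ).prod) θ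
      = ((List.ofFn fun i => B i (0:ℝ)).prod) θ - ∫ t in τ..(0:ℝ), g t := by
    intro τ
    have := intervalIntegral.integral_eq_sub_of_hasDerivAt
      (f := fun t : ℝ => ((List.ofFn fun i => B i t).prod) θ) (f' := g)
      (a := τ) (b := 0) (fun x _ => hΨderiv x) (contg.intervalIntegrable τ 0)
    rw [this]; abel
  refine ⟨((List.ofFn fun i => B i (0:ℝ)).prod) θ - ∫ t in Set.Iic (0:ℝ), g t, ?_⟩
  have hT : Tendsto (fun τ : ℝ => ∫ t in τ..(0:ℝ), g t) atBot
      (nhds (∫ t in Set.Iic (0:ℝ), g t)) :=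
    MeasureTheory.intervalIntegral_tendsto_integral_Iic 0 hgint tendsto_id
  have := hT.const_sub (((List.ofFn fun i => B i (0:ℝ)).prod) θ)
  refine this.congr fun τ => ?_
  exact (hFTC τ).symm
end

section
/- Let H be a Hilbert space, θ ∈ H, and {B_j(τ)}_{j=1,…,n}, {B'_j(τ)}_{j=1,…,n} two families of uniformly bounded operators with B_j(τ)θ = B'_j(τ)θ =: ψ_j independent of τ, such that ‖[B_i^{#}(τ), B_j^{#}(τ')]‖ → 0 as τ, τ' → −∞ for all choices of # ∈ {unprimed, primed} and i ≠ j. If the limits Ψ = lim_{τ→−∞} B_1(τ)⋯B_n(τ)θ and Ψ' = lim_{τ→−∞} B'_1(τ)⋯B'_n(τ)θ both exist, then Ψ = Ψ'. -/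
open Filter

lemma aux_prod_apply_bound {H : Type*} [NormedAddCommGroup H] [InnerProductSpace ℂ H]
    (K : ℝ) (hK : 1 ≤ K) (θ : H) :
    ∀ l : List (H →L[ℂ] H), (∀ C ∈ l, ‖C‖ ≤ K) → ‖l.prod θ‖ ≤ K ^ l.length * ‖θ‖ := by
  intro l
  induction l with
  | nil => simp
  | cons C t ih =>
    intro h
    have hC : ‖C‖ ≤ K := h C (by simp)
    have ht := ih (fun D hD => h D (by simp [hD]))
    have : ‖(C :: t).prod θ‖ ≤ ‖C‖ * ‖t.prod θ‖ := by
      simp [List.prod_cons, ContinuousLinearMap.mul_apply]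
      exact C.le_opNorm _
    calc ‖(C :: t).prod θ‖ ≤ ‖C‖ * ‖t.prod θ‖ := this
      _ ≤ K * (K ^ t.length * ‖θ‖) := by
          apply mul_le_mul hC ht (norm_nonneg _) (le_trans zero_le_one hK)
      _ = K ^ (C :: t).length * ‖θ‖ := by ring_nf; rw [List.length_cons]; ring

lemma aux_D {H : Type*} [NormedAddCommGroup H] [InnerProductSpace ℂ H]
    (K : ℝ) (hK : 1 ≤ K) (θ : H) (D : H →L[ℂ] H) (hDθ : D θ = 0) :
    ∀ l : List (H →L[ℂ] H), (∀ C ∈ l, ‖C‖ ≤ K) →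
      ‖(D * l.prod) θ‖ ≤ (l.map fun C => ‖D * C - C * D‖).sum * (K ^ l.length * ‖θ‖) := by
  intro l
  induction l with
  | nil => simp [ContinuousLinearMap.mul_apply, hDθ]
  | cons C t ih =>
    intro h
    have hC : ‖C‖ ≤ K := h C (by simp)
    have ht := ih (fun E hE => h E (by simp [hE]))
    have hsplit : (D * (C :: t).prod) θ = (D * C - C * D) (t.prod θ) + C ((D * t.prod) θ) := by
      simp [List.prod_cons, ContinuousLinearMap.mul_apply, ContinuousLinearMap.sub_apply]
    have hprodθ : ‖t.prod θ‖ ≤ K ^ t.length * ‖θ‖ :=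
      aux_prod_apply_bound K hK θ t (fun E hE => h E (by simp [hE]))
    have h1 : ‖(D * C - C * D) (t.prod θ)‖ ≤ ‖D * C - C * D‖ * (K ^ t.length * ‖θ‖) := by
      calc ‖(D * C - C * D) (t.prod θ)‖ ≤ ‖D * C - C * D‖ * ‖t.prod θ‖ :=
            (D * C - C * D).le_opNorm _
        _ ≤ _ := by
            apply mul_le_mul_of_nonneg_left hprodθ (norm_nonneg _)
    have h2 : ‖C ((D * t.prod) θ)‖ ≤
        K * ((t.map fun E => ‖D * E - E * D‖).sum * (K ^ t.length * ‖θ‖)) := by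
      calc ‖C ((D * t.prod) θ)‖ ≤ ‖C‖ * ‖(D * t.prod) θ‖ := C.le_opNorm _
        _ ≤ K * ((t.map fun E => ‖D * E - E * D‖).sum * (K ^ t.length * ‖θ‖)) := by
            apply mul_le_mul hC ht (norm_nonneg _) (le_trans zero_le_one hK)
    have hsumnn : 0 ≤ (t.map fun E => ‖D * E - E * D‖).sum :=
      List.sum_nonneg (by intro x hx; simp at hx; obtain ⟨a, _, rfl⟩ := hx; exact norm_nonneg _)
    have hKp : (0:ℝ) ≤ K ^ t.length * ‖θ‖ :=
      mul_nonneg (pow_nonneg (le_trans zero_le_one hK) _) (norm_nonneg _)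
    calc ‖(D * (C :: t).prod) θ‖
        ≤ ‖(D * C - C * D) (t.prod θ)‖ + ‖C ((D * t.prod) θ)‖ := by
          rw [hsplit]; exact norm_add_le _ _
      _ ≤ ‖D * C - C * D‖ * (K ^ t.length * ‖θ‖)
            + K * ((t.map fun E => ‖D * E - E * D‖).sum * (K ^ t.length * ‖θ‖)) :=
          add_le_add h1 h2
      _ ≤ ((C :: t).map fun E => ‖D * E - E * D‖).sum * (K ^ (C :: t).length * ‖θ‖) := by
          simp only [List.map_cons, List.sum_cons, List.length_cons]
          have hKt : K ^ t.length ≤ K ^ (t.length + 1) :=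
            pow_le_pow_right₀ hK (Nat.le_succ _)
          have e : K ^ (t.length + 1) = K ^ t.length * K := pow_succ K t.length
          have f1 : ‖D * C - C * D‖ * (K ^ t.length * ‖θ‖)
              ≤ ‖D * C - C * D‖ * (K ^ (t.length + 1) * ‖θ‖) :=
            mul_le_mul_of_nonneg_left
              (mul_le_mul_of_nonneg_right hKt (norm_nonneg θ)) (norm_nonneg _)
          have f2 : K * ((t.map fun E => ‖D * E - E * D‖).sum * (K ^ t.length * ‖θ‖))
              = (t.map fun E => ‖D * E - E * D‖).sum * (K ^ (t.length + 1) * ‖θ‖) := by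
            rw [e]; ring
          linarith [f1, f2.le, f2.ge]

lemma list_sum_tendsto_zero {ι : Type*} (f : ι → ℝ → ℝ) :
    ∀ l : List ι, (∀ i ∈ l, Tendsto (f i) atBot (nhds 0)) →
      Tendsto (fun τ => (l.map fun i => f i τ).sum) atBot (nhds 0) := by
  intro l
  induction l with
  | nil => simp [tendsto_const_nhds]
  | cons a t ih =>
    intro h
    have := (h a (by simp)).add (ih (fun i hi => h i (by simp [hi])))
    simpa using this

lemma key_lemma
    {H : Type*} [NormedAddCommGroup H] [InnerProductSpace ℂ H]
    (θ : H) (n : ℕ) (B B' : Fin n → ℝ → (H →L[ℂ] H)) (ψ : Fin n → H)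
    (M : ℝ) (hboundB : ∀ j τ, ‖B j τ‖ ≤ M) (hboundB' : ∀ j τ, ‖B' j τ‖ ≤ M)
    (hB : ∀ j τ, B j τ θ = ψ j) (hB' : ∀ j τ, B' j τ θ = ψ j)
    (hcomm : ∀ i j, i ≠ j → ∀ F G : Fin n → ℝ → (H →L[ℂ] H),
      (F = B ∨ F = B') → (G = B ∨ G = B') →
      Tendsto (fun p : ℝ × ℝ => ‖F i p.1 * G j p.2 - G j p.2 * F i p.1‖)
        (atBot ×ˢ atBot) (nhds 0)) :
    ∀ l : List (Fin n), l.Nodup →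
      Tendsto (fun τ => ‖(l.map fun j => B j τ).prod θ - (l.map fun j => B' j τ).prod θ‖)
        atBot (nhds 0) := by
  set K := max M 1 with hKdef
  have hK : 1 ≤ K := le_max_right _ _
  have hK0 : 0 ≤ K := le_trans zero_le_one hK
  have hbB : ∀ j τ, ‖B j τ‖ ≤ K := fun j τ => le_trans (hboundB j τ) (le_max_left _ _)
  have hbB' : ∀ j τ, ‖B' j τ‖ ≤ K := fun j τ => le_trans (hboundB' j τ) (le_max_left _ _)
  have hdiag : Tendsto (fun τ : ℝ => (τ, τ)) atBot (atBot ×ˢ atBot) :=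
    Tendsto.prodMk tendsto_id tendsto_id
  intro l
  induction l with
  | nil => simp [tendsto_const_nhds]
  | cons j t ih =>
    intro hnd
    have hjt : j ∉ t := (List.nodup_cons.mp hnd).1
    have hndt : t.Nodup := (List.nodup_cons.mp hnd).2
    have iht := ih hndt
    -- decompose
    have hdecomp : ∀ τ : ℝ,
        ((j :: t).map fun i => B i τ).prod θ - ((j :: t).map fun i => B' i τ).prod θ
        = B j τ ((t.map fun i => B i τ).prod θ - (t.map fun i => B' i τ).prod θ)
          + ((B j τ - B' j τ) * (t.map fun i => B' i τ).prod) θ := by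
      intro τ
      simp [List.map_cons, List.prod_cons, ContinuousLinearMap.mul_apply,
        ContinuousLinearMap.sub_apply, map_sub]
    -- term 1
    have h1 : Tendsto (fun τ : ℝ =>
        ‖B j τ ((t.map fun i => B i τ).prod θ - (t.map fun i => B' i τ).prod θ)‖)
        atBot (nhds 0) := by
      apply squeeze_zero (fun τ => norm_nonneg _)
        (fun τ => ?_) (by simpa only [mul_zero] using iht.const_mul K)
      calc ‖B j τ _‖ ≤ ‖B j τ‖ * ‖_‖ := (B j τ).le_opNorm _
        _ ≤ K * ‖(t.map fun i => B i τ).prod θ - (t.map fun i => B' i τ).prod θ‖ :=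
            mul_le_mul_of_nonneg_right (hbB j τ) (norm_nonneg _)
    -- term 2
    have h2 : Tendsto (fun τ : ℝ =>
        ‖((B j τ - B' j τ) * (t.map fun i => B' i τ).prod) θ‖) atBot (nhds 0) := by
      have hsum : Tendsto (fun τ : ℝ =>
          ((t.map fun i => B' i τ).map fun C => ‖(B j τ - B' j τ) * C - C * (B j τ - B' j τ)‖).sum)
          atBot (nhds 0) := by
        have : ∀ τ, ((t.map fun i => B' i τ).map
              fun C => ‖(B j τ - B' j τ) * C - C * (B j τ - B' j τ)‖).sum
            = (t.map fun i => ‖(B j τ - B' j τ) * B' i τ - B' i τ * (B j τ - B' j τ)‖).sum := by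
          intro τ; rw [List.map_map]; rfl
        simp only [this]
        apply list_sum_tendsto_zero
          (fun i τ => ‖(B j τ - B' j τ) * B' i τ - B' i τ * (B j τ - B' j τ)‖)
        intro i hi
        have hij : j ≠ i := fun h => hjt (h ▸ hi)
        have hc1 := (hcomm j i hij B B' (Or.inl rfl) (Or.inr rfl)).comp hdiag
        have hc2 := (hcomm j i hij B' B' (Or.inr rfl) (Or.inr rfl)).comp hdiag
        apply squeeze_zero (fun τ => norm_nonneg _) (fun τ => ?_)
          (by simpa only [add_zero] using hc1.add hc2)
        have : (B j τ - B' j τ) * B' i τ - B' i τ * (B j τ - B' j τ)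
            = (B j τ * B' i τ - B' i τ * B j τ) - (B' j τ * B' i τ - B' i τ * B' j τ) := by
          noncomm_ring
        rw [this]
        exact norm_sub_le _ _
      apply squeeze_zero (fun τ => norm_nonneg _) (fun τ => ?_)
        (by simpa only [zero_mul] using hsum.mul_const (K ^ t.length * ‖θ‖))
      have hDθ : (B j τ - B' j τ) θ = 0 := by
        simp [ContinuousLinearMap.sub_apply, hB, hB']
      have := aux_D K hK θ (B j τ - B' j τ) hDθ (t.map fun i => B' i τ)
        (by intro C hC; simp at hC; obtain ⟨i, _, rfl⟩ := hC; exact hbB' i τ)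
      simpa [List.length_map] using this
    have h12 := h1.add h2
    apply squeeze_zero (fun τ => norm_nonneg _) (fun τ => ?_)
      (by simpa only [add_zero] using h12)
    rw [hdecomp τ]
    exact norm_add_le _ _

/-- If two families of operator realizations `B_j`, `B'_j` produce the same
one-particle vectors `ψ_j = B_j(τ)θ = B'_j(τ)θ` and all mixed commutators of distinct factors
vanish in norm as the times tend to `−∞`, then the corresponding in-state vectors coincide. -/
theorem stmt10
    {H : Type*} [NormedAddCommGroup H] [InnerProductSpace ℂ H] [CompleteSpace H]
    (θ : H) (n : ℕ) (B B' : Fin n → ℝ → (H →L[ℂ] H)) (ψ : Fin n → H)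
    (M : ℝ) (hboundB : ∀ j τ, ‖B j τ‖ ≤ M) (hboundB' : ∀ j τ, ‖B' j τ‖ ≤ M)
    (hB : ∀ j τ, B j τ θ = ψ j) (hB' : ∀ j τ, B' j τ θ = ψ j)
    (hcomm : ∀ i j, i ≠ j → ∀ F G : Fin n → ℝ → (H →L[ℂ] H),
      (F = B ∨ F = B') → (G = B ∨ G = B') →
      Tendsto (fun p : ℝ × ℝ => ‖F i p.1 * G j p.2 - G j p.2 * F i p.1‖)
        (atBot ×ˢ atBot) (nhds 0))
    (Ψ Ψ' : H)
    (hΨ : Tendsto (fun τ : ℝ => ((List.ofFn fun j => B j τ).prod) θ) atBot (nhds Ψ))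
    (hΨ' : Tendsto (fun τ : ℝ => ((List.ofFn fun j => B' j τ).prod) θ) atBot (nhds Ψ')) :
    Ψ = Ψ' := by
  have hkey := key_lemma θ n B B' ψ M hboundB hboundB' hB hB' hcomm
    (List.finRange n) (List.nodup_finRange n)
  have hofFn : ∀ (C : Fin n → ℝ → (H →L[ℂ] H)) (τ : ℝ),
      (List.ofFn fun j => C j τ) = (List.finRange n).map fun j => C j τ := by
    intro C τ; rw [List.ofFn_eq_map]
  have hdiff : Tendsto (fun τ : ℝ =>
      ((List.ofFn fun j => B j τ).prod) θ - ((List.ofFn fun j => B' j τ).prod) θ)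
      atBot (nhds 0) := by
    rw [tendsto_zero_iff_norm_tendsto_zero]
    simpa only [hofFn] using hkey
  have h1 : Tendsto (fun τ : ℝ =>
      ((List.ofFn fun j => B j τ).prod) θ - ((List.ofFn fun j => B' j τ).prod) θ)
      atBot (nhds (Ψ - Ψ')) := hΨ.sub hΨ'
  have := tendsto_nhds_unique h1 hdiff
  exact sub_eq_zero.mp this
end

section
/- Let L be a Banach space with vectors ω ∈ L and α ∈ L* (the dual), and let L_j(τ) (j=1,…,n) and L'_k(τ') (k=1,…,m) be uniformly bounded operator families on L with: L_j(τ)ω independent of τ, (L'_k(τ'))^* α independent of τ', pairwise commutators ‖[L_i(τ), L_j(σ)]‖ → 0 as τ, σ → −∞, and ‖[L'_k(τ'), L'_l(σ')]‖ → 0 as τ', σ' → +∞. Assume the limit Λ = lim_{τ_j → −∞} L_1(τ_1)⋯L_n(τ_n)ω exists and the limit of ⟨α, L'_1(τ'_1)⋯L'_m(τ'_m) Λ⟩ as all τ'_k → +∞ exists. Then this limit is invariant under any permutation of the factors L_1,…,L_n and under any permutation of the factors L'_1,…,L'_m. -/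
open Filter

section Aux

variable {L : Type*} [NormedAddCommGroup L] [NormedSpace ℝ L]

lemma aux_prod_norm_le {ι : Type*} (M : ℝ) (hM : 1 ≤ M) :
    ∀ (l : List (ι → (L →L[ℝ] L))), (∀ f ∈ l, ∀ t, ‖f t‖ ≤ M) →
      ∀ t : ι, ‖(l.map (· t)).prod‖ ≤ M ^ l.length := by
  intro l
  induction l with
  | nil =>
      intro _ t
      simp only [List.map_nil, List.prod_nil, List.length_nil, pow_zero]
      exact show ‖(1 : L →L[ℝ] L)‖ ≤ 1 from ContinuousLinearMap.norm_id_le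
  | cons f l ih =>
      intro h t
      simp only [List.map_cons, List.prod_cons, List.length_cons, pow_succ]
      calc ‖f t * (l.map (· t)).prod‖ ≤ ‖f t‖ * ‖(l.map (· t)).prod‖ := norm_mul_le _ _
        _ ≤ M * M ^ l.length :=
            mul_le_mul (h f List.mem_cons_self t)
              (ih (fun g hg => h g (List.mem_cons_of_mem f hg)) t)
              (norm_nonneg _) (le_trans zero_le_one hM)
        _ = M ^ l.length * M := mul_comm _ _

lemma aux_perm_tendsto {ι : Type*} {𝓕 : Filter ι} (M : ℝ) (hM : 1 ≤ M)
    {l₁ l₂ : List (ι → (L →L[ℝ] L))} (hp : l₁.Perm l₂) :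
    (∀ f ∈ l₁, ∀ t, ‖f t‖ ≤ M) →
    (∀ f ∈ l₁, ∀ g ∈ l₁, Tendsto (fun t => ‖f t * g t - g t * f t‖) 𝓕 (nhds 0)) →
    Tendsto (fun t => ‖(l₁.map (· t)).prod - (l₂.map (· t)).prod‖) 𝓕 (nhds 0) := by
  induction hp with
  | nil => intro _ _; simpa using (tendsto_const_nhds : Tendsto (fun _ : ι => (0:ℝ)) 𝓕 _)
  | @cons x l₁' l₂' h ih =>
      intro hb hc
      have ih' := ih (fun f hf t => hb f (List.mem_cons_of_mem x hf) t)
        (fun f hf g hg => hc f (List.mem_cons_of_mem x hf) g (List.mem_cons_of_mem x hg))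
      refine squeeze_zero (fun t => norm_nonneg _)
        (g := fun t => M * ‖(l₁'.map (· t)).prod - (l₂'.map (· t)).prod‖) (fun t => ?_) ?_
      · simp only [List.map_cons, List.prod_cons, ← mul_sub]
        calc ‖x t * ((l₁'.map (· t)).prod - (l₂'.map (· t)).prod)‖
            ≤ ‖x t‖ * ‖(l₁'.map (· t)).prod - (l₂'.map (· t)).prod‖ := norm_mul_le _ _
          _ ≤ M * ‖(l₁'.map (· t)).prod - (l₂'.map (· t)).prod‖ :=
              mul_le_mul_of_nonneg_right (hb x List.mem_cons_self t) (norm_nonneg _)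
      · simpa using ih'.const_mul M
  | @swap x y l =>
      intro hb hc
      have hxy := hc y (by simp) x (by simp)
      refine squeeze_zero (fun t => norm_nonneg _)
        (g := fun t => ‖y t * x t - x t * y t‖ * M ^ l.length) (fun t => ?_) ?_
      · simp only [List.map_cons, List.prod_cons]
        have heq : y t * (x t * (l.map (· t)).prod) - x t * (y t * (l.map (· t)).prod)
            = (y t * x t - x t * y t) * (l.map (· t)).prod := by
          rw [sub_mul, mul_assoc, mul_assoc]
        rw [heq]
        calc ‖(y t * x t - x t * y t) * (l.map (· t)).prod‖
            ≤ ‖y t * x t - x t * y t‖ * ‖(l.map (· t)).prod‖ := norm_mul_le _ _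
          _ ≤ ‖y t * x t - x t * y t‖ * M ^ l.length :=
              mul_le_mul_of_nonneg_left
                (aux_prod_norm_le M hM l
                  (fun f hf t' => hb f (List.mem_cons_of_mem y (List.mem_cons_of_mem x hf)) t') t)
                (norm_nonneg _)
      · simpa using hxy.mul_const (M ^ l.length)
  | @trans l₁' l₂' l₃' h₁ h₂ ih₁ ih₂ =>
      intro hb hc
      have hb₂ : ∀ f ∈ l₂', ∀ t, ‖f t‖ ≤ M := fun f hf => hb f (h₁.mem_iff.2 hf)
      have hc₂ : ∀ f ∈ l₂', ∀ g ∈ l₂', Tendsto (fun t => ‖f t * g t - g t * f t‖) 𝓕 (nhds 0) :=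
        fun f hf g hg => hc f (h₁.mem_iff.2 hf) g (h₁.mem_iff.2 hg)
      refine squeeze_zero (fun t => norm_nonneg _)
        (g := fun t => ‖(l₁'.map (· t)).prod - (l₂'.map (· t)).prod‖
          + ‖(l₂'.map (· t)).prod - (l₃'.map (· t)).prod‖) (fun t => ?_) ?_
      · calc ‖(l₁'.map (· t)).prod - (l₃'.map (· t)).prod‖
            = ‖((l₁'.map (· t)).prod - (l₂'.map (· t)).prod)
              + ((l₂'.map (· t)).prod - (l₃'.map (· t)).prod)‖ := by rw [sub_add_sub_cancel]
          _ ≤ _ := norm_add_le _ _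
      · simpa using (ih₁ hb hc).add (ih₂ hb₂ hc₂)

end Aux

lemma aux_tendsto_comp_perm {n : ℕ} (π : Equiv.Perm (Fin n)) (F : Filter ℝ) :
    Tendsto (fun τ : Fin n → ℝ => τ ∘ ⇑π) (Filter.pi fun _ => F) (Filter.pi fun _ => F) :=
  Filter.tendsto_pi.2 fun j => Filter.tendsto_eval_pi (fun _ => F) (π j)

lemma aux_perm_diff_tendsto {L : Type*} [NormedAddCommGroup L] [NormedSpace ℝ L]
    {n : ℕ} (Ls : Fin n → ℝ → (L →L[ℝ] L)) (F : Filter ℝ) (M : ℝ)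
    (hbound : ∀ j τ, ‖Ls j τ‖ ≤ M)
    (hcomm : ∀ i j, Tendsto
      (fun p : ℝ × ℝ => ‖Ls i p.1 * Ls j p.2 - Ls j p.2 * Ls i p.1‖) (F ×ˢ F) (nhds 0))
    (π : Equiv.Perm (Fin n)) :
    Tendsto (fun τ : Fin n → ℝ => ‖(List.ofFn fun j => Ls (π j) (τ j)).prod
      - (List.ofFn fun j => Ls j (τ (π⁻¹ j))).prod‖) (Filter.pi fun _ => F) (nhds 0) := by
  have hp : (List.ofFn (((fun i τ => Ls i (τ (π⁻¹ i))) :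
        Fin n → ((Fin n → ℝ) → (L →L[ℝ] L))) ∘ ⇑π)).Perm
      (List.ofFn (fun i τ => Ls i (τ (π⁻¹ i)))) :=
    π.ofFn_comp_perm _
  have hb : ∀ f ∈ List.ofFn (((fun i τ => Ls i (τ (π⁻¹ i))) :
        Fin n → ((Fin n → ℝ) → (L →L[ℝ] L))) ∘ ⇑π), ∀ t, ‖f t‖ ≤ max M 1 := by
    intro f hf t
    obtain ⟨i, rfl⟩ := List.mem_ofFn.1 hf
    exact le_trans (hbound _ _) (le_max_left _ _)
  have hc : ∀ f ∈ List.ofFn (((fun i τ => Ls i (τ (π⁻¹ i))) :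
        Fin n → ((Fin n → ℝ) → (L →L[ℝ] L))) ∘ ⇑π),
      ∀ g ∈ List.ofFn (((fun i τ => Ls i (τ (π⁻¹ i))) :
        Fin n → ((Fin n → ℝ) → (L →L[ℝ] L))) ∘ ⇑π),
      Tendsto (fun t => ‖f t * g t - g t * f t‖) (Filter.pi fun _ => F) (nhds 0) := by
    intro f hf g hg
    obtain ⟨i, rfl⟩ := List.mem_ofFn.1 hf
    obtain ⟨j, rfl⟩ := List.mem_ofFn.1 hg
    have hpair : Tendsto (fun t : Fin n → ℝ => (t (π⁻¹ (π i)), t (π⁻¹ (π j))))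
        (Filter.pi fun _ => F) (F ×ˢ F) :=
      (Filter.tendsto_eval_pi (fun _ => F) _).prodMk (Filter.tendsto_eval_pi (fun _ => F) _)
    simpa [Function.comp_def] using (hcomm (π i) (π j)).comp hpair
  have D := aux_perm_tendsto (max M 1) (le_max_right _ _) hp hb hc
  refine D.congr fun τ => ?_
  have e1 : (List.ofFn (((fun i τ => Ls i (τ (π⁻¹ i))) :
        Fin n → ((Fin n → ℝ) → (L →L[ℝ] L))) ∘ ⇑π)).map (· τ)
      = List.ofFn fun j => Ls (π j) (τ j) := by
    rw [List.map_ofFn]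
    exact congrArg List.ofFn (funext fun j => by simp [Function.comp])
  have e2 : (List.ofFn ((fun i τ => Ls i (τ (π⁻¹ i))) :
        Fin n → ((Fin n → ℝ) → (L →L[ℝ] L)))).map (· τ)
      = List.ofFn fun j => Ls j (τ (π⁻¹ j)) := by
    rw [List.map_ofFn]; rfl
  rw [e1, e2]


/-- Symmetry of the inclusive scattering matrix: the limit
`lim ⟨α, L'_1(τ'_1)⋯L'_m(τ'_m) L_1(τ_1)⋯L_n(τ_n) ω⟩` (first all `τ_j → −∞`, then all
`τ'_k → +∞`) is invariant under permutations of the `L_j` and of the `L'_k`. -/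
theorem stmt11
    {L : Type*} [NormedAddCommGroup L] [NormedSpace ℝ L] [CompleteSpace L]
    (ω : L) (α : L →L[ℝ] ℝ) (n m : ℕ)
    (Ls : Fin n → ℝ → (L →L[ℝ] L)) (Ls' : Fin m → ℝ → (L →L[ℝ] L))
    (M : ℝ) (hbound : ∀ j τ, ‖Ls j τ‖ ≤ M) (hbound' : ∀ k τ, ‖Ls' k τ‖ ≤ M)
    (hconst : ∀ j τ τ', Ls j τ ω = Ls j τ' ω)
    (hconst' : ∀ k τ τ', α.comp (Ls' k τ) = α.comp (Ls' k τ'))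
    (hcomm : ∀ i j, Tendsto
      (fun p : ℝ × ℝ => ‖Ls i p.1 * Ls j p.2 - Ls j p.2 * Ls i p.1‖)
      (atBot ×ˢ atBot) (nhds 0))
    (hcomm' : ∀ k l, Tendsto
      (fun p : ℝ × ℝ => ‖Ls' k p.1 * Ls' l p.2 - Ls' l p.2 * Ls' k p.1‖)
      (atTop ×ˢ atTop) (nhds 0))
    (Λ : L)
    (hΛ : Tendsto (fun τ : Fin n → ℝ => ((List.ofFn fun j => Ls j (τ j)).prod) ω)
      (Filter.pi fun _ => atBot) (nhds Λ))
    (S : ℝ)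
    (hS : Tendsto (fun τ' : Fin m → ℝ => α (((List.ofFn fun k => Ls' k (τ' k)).prod) Λ))
      (Filter.pi fun _ => atTop) (nhds S)) :
    ∀ (πn : Equiv.Perm (Fin n)) (πm : Equiv.Perm (Fin m)),
      ∃ Λπ : L,
        Tendsto (fun τ : Fin n → ℝ => ((List.ofFn fun j => Ls (πn j) (τ j)).prod) ω)
          (Filter.pi fun _ => atBot) (nhds Λπ) ∧
        Tendsto (fun τ' : Fin m → ℝ =>
            α (((List.ofFn fun k => Ls' (πm k) (τ' k)).prod) Λπ))
          (Filter.pi fun _ => atTop) (nhds S) := by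
  intro πn πm
  refine ⟨Λ, ?_, ?_⟩
  · have D := aux_perm_diff_tendsto Ls atBot M hbound hcomm πn
    have hre : Tendsto (fun τ : Fin n → ℝ =>
        ((List.ofFn fun j => Ls j (τ (πn⁻¹ j))).prod) ω)
        (Filter.pi fun _ => atBot) (nhds Λ) := by
      simpa [Function.comp_def] using hΛ.comp (aux_tendsto_comp_perm πn⁻¹ atBot)
    have h0 : Tendsto (fun τ : Fin n → ℝ =>
        (((List.ofFn fun j => Ls (πn j) (τ j)).prod
          - (List.ofFn fun j => Ls j (τ (πn⁻¹ j))).prod)) ω)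
        (Filter.pi fun _ => atBot) (nhds 0) := by
      refine squeeze_zero_norm (fun τ => ContinuousLinearMap.le_opNorm _ ω) ?_
      simpa using D.mul_const ‖ω‖
    have hsum := h0.add hre
    rw [zero_add] at hsum
    refine hsum.congr fun τ => ?_
    simp [ContinuousLinearMap.sub_apply]
  · have D := aux_perm_diff_tendsto Ls' atTop M hbound' hcomm' πm
    have hre : Tendsto (fun τ' : Fin m → ℝ =>
        α (((List.ofFn fun k => Ls' k (τ' (πm⁻¹ k))).prod) Λ))
        (Filter.pi fun _ => atTop) (nhds S) := by
      simpa [Function.comp_def] using hS.comp (aux_tendsto_comp_perm πm⁻¹ atTop)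
    have h0 : Tendsto (fun τ' : Fin m → ℝ =>
        α ((((List.ofFn fun k => Ls' (πm k) (τ' k)).prod
          - (List.ofFn fun k => Ls' k (τ' (πm⁻¹ k))).prod)) Λ))
        (Filter.pi fun _ => atTop) (nhds 0) := by
      refine squeeze_zero_norm (a := fun τ' : Fin m → ℝ =>
        ‖α‖ * (‖(List.ofFn fun k => Ls' (πm k) (τ' k)).prod
          - (List.ofFn fun k => Ls' k (τ' (πm⁻¹ k))).prod‖ * ‖Λ‖)) (fun τ' => ?_) ?_
      · calc ‖α ((((List.ofFn fun k => Ls' (πm k) (τ' k)).prod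
              - (List.ofFn fun k => Ls' k (τ' (πm⁻¹ k))).prod)) Λ)‖
            ≤ ‖α‖ * ‖(((List.ofFn fun k => Ls' (πm k) (τ' k)).prod
              - (List.ofFn fun k => Ls' k (τ' (πm⁻¹ k))).prod)) Λ‖ :=
            ContinuousLinearMap.le_opNorm _ _
          _ ≤ _ :=
            mul_le_mul_of_nonneg_left (ContinuousLinearMap.le_opNorm _ _) (norm_nonneg _)
      · simpa using (D.mul_const ‖Λ‖).const_mul ‖α‖
    have hsum := h0.add hre
    rw [zero_add] at hsum
    refine hsum.congr fun τ' => ?_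
    simp [ContinuousLinearMap.sub_apply]
end
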